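/- Let G be a connected graph on vertex set {1,...,n} with n ≥ 2 and Φ = (F_1,...,F_n) with |V(F_i)| ≥ 2 for all i. Then γ_t(G) = γ_t(G[Φ]) = γ_{tr}(G[Φ]) = γ_t^{oc}(G[Φ]). -/

import Mathlib

open scoped Classical

/-- A dominating set: every vertex is in `D` or adjacent to a vertex of `D`. -/
def isDominatingSet {V : Type*} (H : SimpleGraph V) (D : Finset V) : Prop :=
  ∀ v : V, v ∈ D ∨ ∃ u ∈ D, H.Adj u v

/-- A total dominating set: every vertex has a neighbor in `D`. -/
def isTotalDominatingSet {V : Type*} (H : SimpleGraph V) (D : Finset V) : Prop :=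
  ∀ v : V, ∃ u ∈ D, H.Adj u v

def isMinimalDominatingSet {V : Type*} (H : SimpleGraph V) (D : Finset V) : Prop :=
  isDominatingSet H D ∧ ∀ D' : Finset V, D' ⊂ D → ¬ isDominatingSet H D'

def isMinimalTotalDominatingSet {V : Type*} (H : SimpleGraph V) (D : Finset V) : Prop :=
  isTotalDominatingSet H D ∧ ∀ D' : Finset V, D' ⊂ D → ¬ isTotalDominatingSet H D'

noncomputable def domNum {V : Type*} (H : SimpleGraph V) : ℕ :=
  sInf {k | ∃ D : Finset V, isDominatingSet H D ∧ D.card = k}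

noncomputable def totalDomNum {V : Type*} (H : SimpleGraph V) : ℕ :=
  sInf {k | ∃ D : Finset V, isTotalDominatingSet H D ∧ D.card = k}

noncomputable def upperDomNum {V : Type*} (H : SimpleGraph V) : ℕ :=
  sSup {k | ∃ D : Finset V, isMinimalDominatingSet H D ∧ D.card = k}

noncomputable def upperTotalDomNum {V : Type*} (H : SimpleGraph V) : ℕ :=
  sSup {k | ∃ D : Finset V, isMinimalTotalDominatingSet H D ∧ D.card = k}

/-- Well (γ-)dominated: all minimal dominating sets have the same size. -/
def WellDominated {V : Type*} (H : SimpleGraph V) : Prop :=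
  ∀ D₁ D₂ : Finset V, isMinimalDominatingSet H D₁ → isMinimalDominatingSet H D₂ →
    D₁.card = D₂.card

/-- Well γ_t-dominated: all minimal total dominating sets have the same size. -/
def WellTotalDominated {V : Type*} (H : SimpleGraph V) : Prop :=
  ∀ D₁ D₂ : Finset V, isMinimalTotalDominatingSet H D₁ → isMinimalTotalDominatingSet H D₂ →
    D₁.card = D₂.card

/-- Restrained dominating set: dominating and every vertex outside `D` has a
neighbor outside `D`. -/
def isRestrainedDominatingSet {V : Type*} (H : SimpleGraph V) (D : Finset V) : Prop :=
  isDominatingSet H D ∧ ∀ v ∉ D, ∃ u ∉ D, H.Adj u v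

/-- Outer-connected dominating set: dominating and the subgraph induced by the
complement of `D` is connected. -/
def isOuterConnectedDominatingSet {V : Type*} (H : SimpleGraph V) (D : Finset V) : Prop :=
  isDominatingSet H D ∧ (H.induce ((↑D : Set V)ᶜ)).Connected

def isTotalRestrainedDominatingSet {V : Type*} (H : SimpleGraph V) (D : Finset V) : Prop :=
  isTotalDominatingSet H D ∧ ∀ v ∉ D, ∃ u ∉ D, H.Adj u v

def isTotalOuterConnectedDominatingSet {V : Type*} (H : SimpleGraph V) (D : Finset V) : Prop :=
  isTotalDominatingSet H D ∧ (H.induce ((↑D : Set V)ᶜ)).Connected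

noncomputable def restrainedDomNum {V : Type*} (H : SimpleGraph V) : ℕ :=
  sInf {k | ∃ D : Finset V, isRestrainedDominatingSet H D ∧ D.card = k}

noncomputable def ocDomNum {V : Type*} (H : SimpleGraph V) : ℕ :=
  sInf {k | ∃ D : Finset V, isOuterConnectedDominatingSet H D ∧ D.card = k}

noncomputable def totalRestrainedDomNum {V : Type*} (H : SimpleGraph V) : ℕ :=
  sInf {k | ∃ D : Finset V, isTotalRestrainedDominatingSet H D ∧ D.card = k}

noncomputable def totalOcDomNum {V : Type*} (H : SimpleGraph V) : ℕ :=
  sInf {k | ∃ D : Finset V, isTotalOuterConnectedDominatingSet H D ∧ D.card = k}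

/-- Paired dominating set: dominating and the induced subgraph on `D` has a
perfect matching. -/
def isPairedDominatingSet {V : Type*} (H : SimpleGraph V) (D : Finset V) : Prop :=
  isDominatingSet H D ∧
    ∃ M : SimpleGraph.Subgraph (H.induce (↑D : Set V)), M.IsPerfectMatching

noncomputable def pairedDomNum {V : Type*} (H : SimpleGraph V) : ℕ :=
  sInf {k | ∃ D : Finset V, isPairedDominatingSet H D ∧ D.card = k}

def isIndependentSet {V : Type*} (H : SimpleGraph V) (D : Finset V) : Prop :=
  ∀ u ∈ D, ∀ v ∈ D, ¬ H.Adj u v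

def isMaximalIndependentSet {V : Type*} (H : SimpleGraph V) (D : Finset V) : Prop :=
  isIndependentSet H D ∧ ∀ D' : Finset V, D ⊂ D' → ¬ isIndependentSet H D'

/-- The independent domination number `i(H)`. -/
noncomputable def indepDomNum {V : Type*} (H : SimpleGraph V) : ℕ :=
  sInf {k | ∃ D : Finset V, isMaximalIndependentSet H D ∧ D.card = k}

/-- The independence number `β₀(H)`. -/
noncomputable def indepNum {V : Type*} (H : SimpleGraph V) : ℕ :=
  sSup {k | ∃ D : Finset V, isIndependentSet H D ∧ D.card = k}

/-- An efficient dominating set: every vertex is dominated by exactly one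
member of `D`. -/
def isEfficientDominatingSet {V : Type*} (H : SimpleGraph V) (D : Finset V) : Prop :=
  ∀ v : V, ∃! u : V, u ∈ D ∧ (u = v ∨ H.Adj u v)

/-- The generalized lexicographic product `G[Φ]` of a graph `G` on `Fin n` and a
family `Φ = (F 0, …, F (n-1))` of pairwise disjoint graphs: the `F i` are induced
subgraphs, and vertices in distinct `F i`, `F j` are adjacent iff `i j ∈ E(G)`. -/
def GLP {n : ℕ} (G : SimpleGraph (Fin n)) {V : Fin n → Type*}
    (F : ∀ i, SimpleGraph (V i)) : SimpleGraph (Σ i, V i) where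
  Adj x y := (x.1 ≠ y.1 ∧ G.Adj x.1 y.1) ∨ ∃ h : x.1 = y.1, (F y.1).Adj (h ▸ x.2) y.2
  symm := by
    refine ⟨?_⟩
    rintro ⟨i, a⟩ ⟨j, b⟩ (⟨hne, hadj⟩ | ⟨h, hadj⟩)
    · exact Or.inl ⟨fun hh => hne hh.symm, hadj.symm⟩
    · dsimp only at h
      subst h
      exact Or.inr ⟨rfl, hadj.symm⟩
  loopless := by
    refine ⟨?_⟩
    rintro ⟨i, a⟩ (⟨hne, _⟩ | ⟨h, hadj⟩)
    · exact hne rfl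
    · exact (F i).irrefl hadj

/-- The number of vertices of `D ∩ V(F i)`. -/
noncomputable def layerCount {n : ℕ} {V : Fin n → Type*} [∀ i, Fintype (V i)]
    (D : Finset (Σ i, V i)) (i : Fin n) : ℕ :=
  (D.filter (fun x => x.1 = i)).card


section Aux

variable {n : ℕ} {G : SimpleGraph (Fin n)} {V : Fin n → Type} [∀ i, Fintype (V i)]
  {F : ∀ i, SimpleGraph (V i)}

lemma aux_exists_adj (hn : 2 ≤ n) (hG : G.Connected) (i : Fin n) : ∃ j, G.Adj i j := by
  have : Nontrivial (Fin n) := Fin.nontrivial_iff_two_le.mpr hn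
  obtain ⟨j, hj⟩ := exists_ne i
  obtain ⟨w⟩ := hG.preconnected i j
  cases w with
  | nil => exact absurd rfl hj
  | cons h p => exact ⟨_, h⟩

lemma aux_univ_tds (hn : 2 ≤ n) (hG : G.Connected) :
    isTotalDominatingSet G (Finset.univ : Finset (Fin n)) := by
  intro v
  obtain ⟨j, hj⟩ := aux_exists_adj hn hG v
  exact ⟨j, Finset.mem_univ _, hj.symm⟩

lemma aux_lift (hn : 2 ≤ n) (hG : G.Connected) (hV : ∀ i, 2 ≤ Fintype.card (V i))
    {D : Finset (Fin n)} (hD : isTotalDominatingSet G D) :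
    ∃ D' : Finset (Σ i, V i), D'.card = D.card ∧
      isTotalDominatingSet (GLP G F) D' ∧
      (∀ v ∉ D', ∃ u ∉ D', (GLP G F).Adj u v) ∧
      ((GLP G F).induce ((↑D' : Set (Σ i, V i))ᶜ)).Connected := by
  have hne : ∀ i, Nonempty (V i) := fun i =>
    Fintype.card_pos_iff.mp (by have := hV i; omega)
  let a : ∀ i, V i := fun i => (hne i).some
  have hrex : ∀ i, ∃ c : V i, c ≠ a i := fun i =>
    Fintype.exists_ne_of_one_lt_card (by have := hV i; omega) (a i)
  let r : ∀ i, V i := fun i => (hrex i).choose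
  have hr : ∀ i, r i ≠ a i := fun i => (hrex i).choose_spec
  refine ⟨D.image (fun i => (⟨i, a i⟩ : Σ i, V i)), ?_, ?_, ?_, ?_⟩
  case _ =>
    exact Finset.card_image_of_injective _ (fun i j h => congrArg Sigma.fst h)
  case _ =>
    rintro ⟨j, b⟩
    obtain ⟨i, hi, hadj⟩ := hD j
    exact ⟨⟨i, a i⟩, Finset.mem_image_of_mem _ hi, Or.inl ⟨hadj.ne, hadj⟩⟩
  all_goals {
    have hmem : ∀ (x : Σ i, V i), x ∈ D.image (fun i => (⟨i, a i⟩ : Σ i, V i)) →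
        x.1 ∈ D ∧ x = ⟨x.1, a x.1⟩ := by
      intro x hx
      obtain ⟨i, hi, he⟩ := Finset.mem_image.mp hx
      cases he
      exact ⟨hi, rfl⟩
    have hrnot : ∀ i, (⟨i, r i⟩ : Σ i, V i) ∉ D.image (fun i => (⟨i, a i⟩ : Σ i, V i)) := by
      intro i h
      have := (hmem _ h).2
      have hra : r i = a i := by simpa using this
      exact hr i hra
    first
    | -- restrained
      (rintro ⟨j, b⟩ hv
       obtain ⟨k, hk⟩ := aux_exists_adj hn hG j
       exact ⟨⟨k, r k⟩, hrnot k, Or.inl ⟨hk.ne', hk.symm⟩⟩)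
    | -- connected
      (set D' := D.image (fun i => (⟨i, a i⟩ : Σ i, V i)) with hD'
       set S : Set (Σ i, V i) := (↑D' : Set (Σ i, V i))ᶜ with hS
       have hrS : ∀ i, (⟨i, r i⟩ : Σ i, V i) ∈ S := by
         intro i
         simpa [hS] using hrnot i
       let R : Fin n → S := fun i => ⟨⟨i, r i⟩, hrS i⟩
       have hstep : ∀ i j : Fin n, G.Adj i j →
           ((GLP G F).induce S).Adj (R i) (R j) := by
         intro i j h
         exact Or.inl ⟨h.ne, h⟩
       have hwalk : ∀ {i j : Fin n}, G.Walk i j →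
           ((GLP G F).induce S).Reachable (R i) (R j) := by
         intro i j w
         induction w with
         | nil => exact SimpleGraph.Reachable.refl _
         | cons h p ih => exact (SimpleGraph.Adj.reachable (hstep _ _ h)).trans ih
       have htoR : ∀ x : S, ((GLP G F).induce S).Reachable x (R (x : Σ i, V i).1) := by
         intro x
         obtain ⟨k, hk⟩ := aux_exists_adj hn hG (x : Σ i, V i).1
         have h1 : ((GLP G F).induce S).Adj x (R k) := Or.inl ⟨hk.ne, hk⟩
         have h2 : ((GLP G F).induce S).Adj (R k) (R (x : Σ i, V i).1) :=
           hstep _ _ hk.symm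
         exact (SimpleGraph.Adj.reachable h1).trans (SimpleGraph.Adj.reachable h2)
       rw [SimpleGraph.connected_iff]
       constructor
       · intro x y
         have hxy := hG.preconnected (x : Σ i, V i).1 (y : Σ i, V i).1
         exact (htoR x).trans ((hxy.elim fun w => hwalk w).trans (htoR y).symm)
       · exact ⟨R ⟨0, by omega⟩⟩)
  }

lemma aux_proj (hn : 2 ≤ n) (hG : G.Connected) (hV : ∀ i, 2 ≤ Fintype.card (V i))
    {D : Finset (Σ i, V i)} (hD : isTotalDominatingSet (GLP G F) D) :
    ∃ D' : Finset (Fin n), isTotalDominatingSet G D' ∧ D'.card ≤ D.card := by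
  classical
  have hne : ∀ i, Nonempty (V i) := fun i =>
    Fintype.card_pos_iff.mp (by have := hV i; omega)
  set P : Finset (Fin n) := D.image Sigma.fst with hP
  set B : Finset (Fin n) := P.filter (fun i => ∀ j ∈ P, ¬ G.Adj j i) with hB
  have hBP : B ⊆ P := Finset.filter_subset _ _
  choose nb hnb using (fun i => aux_exists_adj hn hG i)
  refine ⟨P ∪ B.image nb, ?_, ?_⟩
  · intro j
    obtain ⟨v0⟩ := hne j
    obtain ⟨u, hu, hadj⟩ := hD ⟨j, v0⟩
    rcases hadj with ⟨hne', hGadj⟩ | ⟨heq, _⟩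
    · exact ⟨u.1, Finset.mem_union_left _ (Finset.mem_image_of_mem _ hu), hGadj⟩
    · have hjP : j ∈ P := by
        have h' := Finset.mem_image_of_mem Sigma.fst hu
        rw [heq] at h'
        exact h'
      by_cases hb : ∃ k ∈ P, G.Adj k j
      · obtain ⟨k, hk, hkj⟩ := hb
        exact ⟨k, Finset.mem_union_left _ hk, hkj⟩
      · have hjB : j ∈ B := by
          rw [hB]
          exact Finset.mem_filter.mpr ⟨hjP, fun k hk hkadj => hb ⟨k, hk, hkadj⟩⟩
        exact ⟨nb j, Finset.mem_union_right _ (Finset.mem_image_of_mem _ hjB),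
          (hnb j).symm⟩
  · have hfib1 : ∀ i ∈ P, 1 ≤ (D.filter (fun x => x.1 = i)).card := by
      intro i hi
      obtain ⟨x, hx, hxi⟩ := Finset.mem_image.mp hi
      exact Finset.card_pos.mpr ⟨x, Finset.mem_filter.mpr ⟨hx, hxi⟩⟩
    have hfib2 : ∀ i ∈ B, 2 ≤ (D.filter (fun x => x.1 = i)).card := by
      intro i hi
      obtain ⟨hiP, hbad⟩ := Finset.mem_filter.mp hi
      obtain ⟨u, hu, hui⟩ := Finset.mem_image.mp hiP
      obtain ⟨w, hw, hadj⟩ := hD u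
      rcases hadj with ⟨hne', hGadj⟩ | ⟨heq, hF⟩
      · exact absurd (hui ▸ hGadj) (hbad w.1 (Finset.mem_image_of_mem _ hw))
      · have hwne : w ≠ u := by
          intro h
          subst h
          exact (F w.1).irrefl hF
        exact Finset.one_lt_card.mpr
          ⟨w, Finset.mem_filter.mpr ⟨hw, heq.trans hui⟩,
           u, Finset.mem_filter.mpr ⟨hu, hui⟩, hwne⟩
    have hsum : D.card = ∑ i ∈ P, (D.filter (fun x => x.1 = i)).card :=
      Finset.card_eq_sum_card_fiberwise (fun x hx => Finset.mem_image_of_mem _ hx)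
    have hkey : P.card + B.card ≤ D.card := by
      have h1 : ∑ i ∈ P, (if i ∈ B then 2 else 1) ≤
          ∑ i ∈ P, (D.filter (fun x => x.1 = i)).card := by
        refine Finset.sum_le_sum ?_
        intro i hi
        by_cases hib : i ∈ B
        · simpa [hib] using hfib2 i hib
        · simpa [hib] using hfib1 i hi
      have h2 : ∑ i ∈ P, (if i ∈ B then 2 else 1) = P.card + B.card := by
        have : ∀ i ∈ P, (if i ∈ B then 2 else 1) = 1 + (if i ∈ B then 1 else 0) := by
          intro i _
          split <;> rfl
        rw [Finset.sum_congr rfl this, Finset.sum_add_distrib, Finset.sum_const,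
          Finset.sum_ite_mem, Finset.inter_eq_right.mpr hBP]
        simp
      omega
    calc (P ∪ B.image nb).card ≤ P.card + (B.image nb).card :=
          Finset.card_union_le _ _
      _ ≤ P.card + B.card := by
          have := Finset.card_image_le (s := B) (f := nb)
          omega
      _ ≤ D.card := hkey

end Aux

/-- If `|V(F i)| ≥ 2` for all `i`, then
`γ_t(G) = γ_t(G[Φ]) = γ_{tr}(G[Φ]) = γ_t^{oc}(G[Φ])`. -/
theorem stmt_10 {n : ℕ} (hn : 2 ≤ n) (G : SimpleGraph (Fin n)) (hG : G.Connected)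
    (V : Fin n → Type) [∀ i, Fintype (V i)] (F : ∀ i, SimpleGraph (V i))
    (hV : ∀ i, 2 ≤ Fintype.card (V i)) :
    totalDomNum G = totalDomNum (GLP G F) ∧
    totalDomNum (GLP G F) = totalRestrainedDomNum (GLP G F) ∧
    totalRestrainedDomNum (GLP G F) = totalOcDomNum (GLP G F) := by
  classical
  have huniv := aux_univ_tds hn hG
  have hSg : {k | ∃ D : Finset (Fin n), isTotalDominatingSet G D ∧ D.card = k}.Nonempty :=
    ⟨(Finset.univ : Finset (Fin n)).card, Finset.univ, huniv, rfl⟩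
  obtain ⟨D0, hD0, hD0card⟩ := Nat.sInf_mem hSg
  obtain ⟨L, hLcard, hLt, hLr, hLc⟩ := aux_lift (F := F) hn hG hV hD0
  have hLk : L.card = totalDomNum G := hLcard.trans hD0card
  have hbla : totalDomNum (GLP G F) ≤ totalDomNum G :=
    Nat.sInf_le ⟨L, hLt, hLk⟩
  have hcla : totalRestrainedDomNum (GLP G F) ≤ totalDomNum G :=
    Nat.sInf_le ⟨L, ⟨hLt, hLr⟩, hLk⟩
  have hdla : totalOcDomNum (GLP G F) ≤ totalDomNum G :=
    Nat.sInf_le ⟨L, ⟨hLt, hLc⟩, hLk⟩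
  have hSb : {k | ∃ D : Finset (Σ i, V i), isTotalDominatingSet (GLP G F) D ∧
      D.card = k}.Nonempty := ⟨L.card, L, hLt, rfl⟩
  obtain ⟨D1, hD1, hD1card⟩ := Nat.sInf_mem hSb
  obtain ⟨D1', hD1't, hD1'card⟩ := aux_proj hn hG hV hD1
  have halb : totalDomNum G ≤ totalDomNum (GLP G F) :=
    le_trans (Nat.sInf_le ⟨D1', hD1't, rfl⟩) (hD1'card.trans_eq hD1card)
  have hSc : {k | ∃ D : Finset (Σ i, V i), isTotalRestrainedDominatingSet (GLP G F) D ∧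
      D.card = k}.Nonempty := ⟨L.card, L, ⟨hLt, hLr⟩, rfl⟩
  obtain ⟨D2, hD2, hD2card⟩ := Nat.sInf_mem hSc
  have hblc : totalDomNum (GLP G F) ≤ totalRestrainedDomNum (GLP G F) :=
    le_trans (Nat.sInf_le ⟨D2, hD2.1, rfl⟩) (le_of_eq hD2card)
  have hSd : {k | ∃ D : Finset (Σ i, V i), isTotalOuterConnectedDominatingSet (GLP G F) D ∧
      D.card = k}.Nonempty := ⟨L.card, L, ⟨hLt, hLc⟩, rfl⟩
  obtain ⟨D3, hD3, hD3card⟩ := Nat.sInf_mem hSd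
  have hbld : totalDomNum (GLP G F) ≤ totalOcDomNum (GLP G F) :=
    le_trans (Nat.sInf_le ⟨D3, hD3.1, rfl⟩) (le_of_eq hD3card)
  refine ⟨le_antisymm halb hbla, le_antisymm hblc ?_, ?_⟩
  · exact hcla.trans halb
  · omega
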